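/- Let v be a speed law with maximal speed V_max and let ℓ > 0. Let x : [0, ∞) → ℝⁿ solve the Follow-the-Leader system ẋ_1 = V_max, ẋ_α = F(x_{α-1} − x_α) for α ∈ {2, …, n} (with F(Δ) = v(ℓ/Δ) for Δ > 0 and F(Δ) = 0 for Δ ≤ 0), with initial data satisfying x_{α-1}(0) − x_α(0) ≥ ℓ for all α ∈ {2, …, n}. Then for every t ≥ 0 and every α ∈ {2, …, n}, x_{α-1}(t) − x_α(t) ≥ ℓ. In particular no collision ever occurs and the strict ordering x_n(t) < x_{n-1}(t) < … < x_1(t) is preserved for all t ≥ 0. -/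

import Mathlib

/-- A speed law: Lipschitz with constant `K`, valued in `[0, Vmax]` on `[0,∞)`,
(weakly) decreasing, and vanishing for densities `ρ ≥ 1`. -/
def IsSpeedLaw (v : ℝ → ℝ) (K Vmax : ℝ) : Prop :=
  0 < Vmax ∧
  (∀ a b : ℝ, |v a - v b| ≤ K * |a - b|) ∧
  (∀ a b : ℝ, a ≤ b → v b ≤ v a) ∧
  (∀ ρ : ℝ, 0 ≤ ρ → 0 ≤ v ρ ∧ v ρ ≤ Vmax) ∧
  (∀ ρ : ℝ, 1 ≤ ρ → v ρ = 0)

/-- The Follow-the-Leader speed as a function of the headway `Δ`: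
`F Δ = v (ℓ / Δ)` for `Δ > 0`, and `F Δ = 0` for `Δ ≤ 0`. -/
noncomputable def FtLSpeed (v : ℝ → ℝ) (ℓ Δ : ℝ) : ℝ :=
  if 0 < Δ then v (ℓ / Δ) else 0

/-- The index of the vehicle immediately in front of vehicle `α` (for `α.val > 0`). -/
def predIdx {n : ℕ} (α : Fin n) : Fin n :=
  ⟨α.val - 1, Nat.lt_of_le_of_lt (Nat.sub_le _ _) α.isLt⟩

/-- `x : ℝ → Fin n → ℝ` solves the Follow-the-Leader system on `[0, ∞)`:
the leader (index `0`) drives at speed `Vmax`, and each follower `α` drives at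
speed `FtLSpeed v ℓ (x (α-1) - x α)`. -/
def IsFtLSolution (v : ℝ → ℝ) (Vmax ℓ : ℝ) {n : ℕ} (hn : 0 < n)
    (x : ℝ → Fin n → ℝ) : Prop :=
  ∀ t ∈ Set.Ici (0 : ℝ),
    HasDerivWithinAt (fun s => x s ⟨0, hn⟩) Vmax (Set.Ici 0) t ∧
    ∀ α : Fin n, 0 < α.val →
      HasDerivWithinAt (fun s => x s α)
        (FtLSpeed v ℓ (x t (predIdx α) - x t α)) (Set.Ici 0) t

theorem stmt2 (v : ℝ → ℝ) (K Vmax ℓ : ℝ) (hℓ : 0 < ℓ)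
    (hv : IsSpeedLaw v K Vmax)
    (n : ℕ) (hn : 0 < n) (x : ℝ → Fin n → ℝ)
    (hsol : IsFtLSolution v Vmax ℓ hn x)
    (hspacing0 : ∀ α : Fin n, 0 < α.val → x 0 (predIdx α) - x 0 α ≥ ℓ) :
    ∀ t ∈ Set.Ici (0 : ℝ), ∀ α : Fin n, 0 < α.val →
      x t (predIdx α) - x t α ≥ ℓ ∧ x t α < x t (predIdx α) := by
  obtain ⟨hV, hLip, hmono, hbound, hzero⟩ := hv
  have hFnonneg : ∀ Δ : ℝ, 0 ≤ FtLSpeed v ℓ Δ := by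
    intro Δ
    unfold FtLSpeed
    split
    · exact (hbound _ (div_nonneg hℓ.le (le_of_lt ‹0 < Δ›))).1
    · exact le_refl 0
  have hFzero : ∀ Δ : ℝ, Δ ≤ ℓ → FtLSpeed v ℓ Δ = 0 := by
    intro Δ hΔ
    unfold FtLSpeed
    split
    · exact hzero _ ((one_le_div ‹0 < Δ›).mpr hΔ)
    · rfl
  have hderiv : ∀ t ∈ Set.Ici (0:ℝ), ∀ β : Fin n,
      ∃ c, 0 ≤ c ∧ HasDerivWithinAt (fun s => x s β) c (Set.Ici 0) t := by
    intro t ht β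
    rcases Nat.eq_zero_or_pos β.val with h0 | hpos
    · have hβ : β = ⟨0, hn⟩ := Fin.ext h0
      subst hβ
      exact ⟨Vmax, hV.le, (hsol t ht).1⟩
    · exact ⟨_, hFnonneg _, (hsol t ht).2 β hpos⟩
  have key : ∀ t ∈ Set.Ici (0:ℝ), ∀ α : Fin n, 0 < α.val →
      ℓ ≤ x t (predIdx α) - x t α := by
    intro t ht α hα
    by_contra hlt
    push_neg at hlt
    set d : ℝ → ℝ := fun s => x s (predIdx α) - x s α with hd
    have hdD : ∀ s ∈ Set.Ici (0:ℝ), ∃ c, 0 ≤ c ∧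
        HasDerivWithinAt d (c - FtLSpeed v ℓ (d s)) (Set.Ici 0) s := by
      intro s hs
      obtain ⟨c, hc, hder⟩ := hderiv s hs (predIdx α)
      exact ⟨c, hc, hder.sub ((hsol s hs).2 α hα)⟩
    have hdc : ContinuousOn d (Set.Ici 0) := by
      intro s hs
      obtain ⟨c, _, hder⟩ := hdD s hs
      exact hder.continuousWithinAt
    set A : Set ℝ := Set.Icc 0 t ∩ d ⁻¹' Set.Ici ℓ with hA
    have hA0 : (0:ℝ) ∈ A := ⟨⟨le_refl 0, ht⟩, hspacing0 α hα⟩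
    have hAbdd : BddAbove A := ⟨t, fun s hs => hs.1.2⟩
    have hAclosed : IsClosed A :=
      ContinuousOn.preimage_isClosed_of_isClosed
        (hdc.mono Set.Icc_subset_Ici_self) isClosed_Icc isClosed_Ici
    set t₀ : ℝ := sSup A with ht₀
    have ht₀A : t₀ ∈ A := hAclosed.csSup_mem ⟨0, hA0⟩ hAbdd
    have ht₀0 : 0 ≤ t₀ := ht₀A.1.1
    have ht₀t : t₀ < t := by
      rcases lt_or_eq_of_le ht₀A.1.2 with h | h
      · exact h
      · exact absurd (h ▸ ht₀A.2) (not_le.mpr hlt)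
    have hsmall : ∀ s ∈ Set.Ioc t₀ t, d s < ℓ := by
      intro s hs
      by_contra hge
      push_neg at hge
      have : s ∈ A := ⟨⟨le_trans ht₀0 hs.1.le, hs.2⟩, hge⟩
      exact absurd (le_csSup hAbdd this) (not_le.mpr hs.1)
    have hmonoD : MonotoneOn d (Set.Icc t₀ t) := by
      apply monotoneOn_of_deriv_nonneg (convex_Icc t₀ t)
        (hdc.mono (Set.Icc_subset_Ici_self.trans
          (Set.Ici_subset_Ici.mpr ht₀0)))
      · intro s hs
        rw [interior_Icc] at hs
        have hs0 : (0:ℝ) < s := lt_of_le_of_lt ht₀0 hs.1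
        obtain ⟨c, hc, hder⟩ := hdD s hs0.le
        exact (hder.hasDerivAt (Ici_mem_nhds hs0)).differentiableAt.differentiableWithinAt
      · intro s hs
        rw [interior_Icc] at hs
        have hs0 : (0:ℝ) < s := lt_of_le_of_lt ht₀0 hs.1
        obtain ⟨c, hc, hder⟩ := hdD s hs0.le
        have hDA := hder.hasDerivAt (Ici_mem_nhds hs0)
        rw [hDA.deriv]
        have : FtLSpeed v ℓ (d s) = 0 :=
          hFzero _ (hsmall s ⟨hs.1, hs.2.le⟩).le
        rw [this]
        linarith
    have h1 : d t₀ ≤ d t :=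
      hmonoD ⟨le_refl t₀, ht₀t.le⟩ ⟨ht₀t.le, le_refl t⟩ ht₀t.le
    have h2 : ℓ ≤ d t₀ := ht₀A.2
    have h3 : d t < ℓ := hlt
    linarith
  intro t ht α hα
  have h := key t ht α hα
  exact ⟨h, by linarith⟩
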